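/- Let p be a prime and let a and b be positive integers with a < b. The number of fixed-point-free automorphisms of the group Z_{p^a} ⊕ Z_{p^b} is p^{3a+b-2}(p-2)². -/

import Mathlib

namespace FpfAux

variable (p a b : ℕ)

/-- the additive hom `ZMod p^a →+ ZMod p^b` sending `x` to `(x.val * γ.val * p^(b-a) : ℕ)`. -/
noncomputable def gmap (hab : a ≤ b) (γ : ZMod (p ^ a)) : ZMod (p ^ a) →+ ZMod (p ^ b) :=
  ZMod.lift (p ^ a) ⟨zmultiplesHom _ (((γ.val * p ^ (b - a) : ℕ) : ZMod (p ^ b))), by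
    simp only [zmultiplesHom_apply]
    rw [natCast_zsmul, nsmul_eq_mul, ← Nat.cast_mul]
    rw [ZMod.natCast_eq_zero_iff]
    exact ⟨γ.val, by rw [← mul_assoc, mul_comm (p ^ a), mul_assoc, ← pow_add,
      Nat.add_sub_cancel' hab, mul_comm]⟩⟩

lemma gmap_apply (hp0 : p ≠ 0) (hab : a ≤ b) (γ x : ZMod (p ^ a)) :
    gmap p a b hab γ x = ((x.val * (γ.val * p ^ (b - a)) : ℕ) : ZMod (p ^ b)) := by
  haveI : NeZero (p ^ a) := ⟨pow_ne_zero _ hp0⟩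
  have hx : x = (((x.val : ℕ) : ℤ) : ZMod (p ^ a)) := by
    rw [Int.cast_natCast, ZMod.natCast_rightInverse x]
  conv_lhs => rw [hx]
  rw [gmap, ZMod.lift_coe]
  simp only [zmultiplesHom_apply]
  rw [natCast_zsmul, nsmul_eq_mul, ← Nat.cast_mul]

variable {p a b} in
lemma gmap_inj (hp : p.Prime) (ha : 0 < a) (hab : a ≤ b) {γ₁ γ₂ : ZMod (p ^ a)}
    (h : gmap p a b hab γ₁ (1 : ZMod (p ^ a)) = gmap p a b hab γ₂ 1) : γ₁ = γ₂ := by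
  haveI : Fact (1 < p ^ a) := ⟨one_lt_pow₀ hp.one_lt ha.ne'⟩
  haveI : NeZero (p ^ a) := ⟨(pow_pos hp.pos a).ne'⟩
  have h1 := h
  simp only [gmap_apply p a b hp.pos.ne', ZMod.val_one, one_mul] at h1
  rw [ZMod.natCast_eq_natCast_iff] at h1
  rw [show p ^ b = p ^ a * p ^ (b - a) by rw [← pow_add, Nat.add_sub_cancel' hab]] at h1
  have h2 := Nat.ModEq.mul_right_cancel' (pow_ne_zero _ hp.pos.ne') h1
  have h3 : ((γ₁.val : ℕ) : ZMod (p ^ a)) = ((γ₂.val : ℕ) : ZMod (p ^ a)) := by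
    rwa [ZMod.natCast_eq_natCast_iff]
  rwa [ZMod.natCast_rightInverse γ₁, ZMod.natCast_rightInverse γ₂] at h3

/-- reduction mod `p`. -/
noncomputable def cp (n : ℕ) (hn : n ≠ 0) : ZMod (p ^ n) →+* ZMod p :=
  ZMod.castHom (dvd_pow_self p hn) (ZMod p)

variable {p} in
lemma cp_apply (hp0 : p ≠ 0) {n : ℕ} (hn : n ≠ 0) (x : ZMod (p ^ n)) :
    cp p n hn x = ((x.val : ℕ) : ZMod p) := by
  haveI : NeZero (p ^ n) := ⟨pow_ne_zero _ hp0⟩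
  rw [cp, ZMod.castHom_apply, ← ZMod.natCast_val]

variable {p} in
lemma cp_eq_zero_iff (hp0 : p ≠ 0) {n : ℕ} (hn : n ≠ 0) (x : ZMod (p ^ n)) :
    cp p n hn x = 0 ↔ p ∣ x.val := by
  rw [cp_apply hp0 hn, ZMod.natCast_eq_zero_iff]

variable {p} in
lemma isUnit_of_cp_ne_zero (hp : p.Prime) {n : ℕ} (hn : n ≠ 0) (x : ZMod (p ^ n))
    (h : cp p n hn x ≠ 0) : IsUnit x := by
  haveI : NeZero (p ^ n) := ⟨pow_ne_zero _ hp.pos.ne'⟩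
  have h' : ¬ p ∣ x.val := fun hd => h ((cp_eq_zero_iff hp.pos.ne' hn x).mpr hd)
  rw [← ZMod.natCast_rightInverse x, ZMod.isUnit_iff_coprime]
  exact Nat.Coprime.pow_right _ (Nat.coprime_comm.mp (hp.coprime_iff_not_dvd.mpr h'))

/-- the endomorphism of `ZMod p^a × ZMod p^b` with "matrix" `(α β ; γ δ)`. -/
noncomputable def Mmap (hab : a ≤ b) (α β γ : ZMod (p ^ a)) (δ : ZMod (p ^ b)) :
    (ZMod (p ^ a) × ZMod (p ^ b)) →+ (ZMod (p ^ a) × ZMod (p ^ b)) :=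
  AddMonoidHom.prod
    ((AddMonoidHom.mulLeft α).comp (AddMonoidHom.fst _ _) +
      (AddMonoidHom.mulLeft β).comp
        (((ZMod.castHom (pow_dvd_pow p hab) (ZMod (p ^ a))).toAddMonoidHom).comp
          (AddMonoidHom.snd _ _)))
    ((gmap p a b hab γ).comp (AddMonoidHom.fst _ _) +
      (AddMonoidHom.mulLeft δ).comp (AddMonoidHom.snd _ _))

lemma Mmap_apply (hab : a ≤ b) (α β γ : ZMod (p ^ a)) (δ : ZMod (p ^ b))
    (x : ZMod (p ^ a)) (y : ZMod (p ^ b)) :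
    Mmap p a b hab α β γ δ (x, y) =
      (α * x + β * (ZMod.castHom (pow_dvd_pow p hab) (ZMod (p ^ a)) y),
        gmap p a b hab γ x + δ * y) := rfl

variable {p a b} in
lemma Mmap_inj (hp : p.Prime) (ha : 0 < a) (hab : a < b) {α β γ : ZMod (p ^ a)}
    {δ : ZMod (p ^ b)}
    (hα : cp p a ha.ne' α ≠ 0)
    (hδ : cp p b (by omega : b ≠ 0) δ ≠ 0) :
    Function.Injective (Mmap p a b hab.le α β γ δ) := by
  haveI : NeZero (p ^ a) := ⟨pow_ne_zero _ hp.pos.ne'⟩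
  rw [injective_iff_map_eq_zero]
  rintro ⟨x, y⟩ hz
  rw [Mmap_apply, Prod.mk_eq_zero] at hz
  obtain ⟨h1, h2⟩ := hz
  obtain ⟨u, hu⟩ := isUnit_of_cp_ne_zero hp (by omega : b ≠ 0) δ hδ
  have hui : ((u⁻¹ : (ZMod (p ^ b))ˣ) : ZMod (p ^ b)) * δ = 1 := by rw [← hu]; exact u.inv_mul
  have hy : y = -(((u⁻¹ : (ZMod (p ^ b))ˣ) : ZMod (p ^ b)) * gmap p a b hab.le γ x) := by
    linear_combination ((u⁻¹ : (ZMod (p ^ b))ˣ) : ZMod (p ^ b)) * h2 - y * hui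
  set cab := ZMod.castHom (pow_dvd_pow p hab.le) (ZMod (p ^ a)) with hcab
  have hxv : ((x.val : ℕ) : ZMod (p ^ a)) = x := ZMod.natCast_rightInverse x
  rw [hy, gmap_apply p a b hp.pos.ne', map_neg, map_mul, map_natCast] at h1
  push_cast at h1
  rw [hxv] at h1
  set w : ZMod (p ^ a) := α - β * (cab ((u⁻¹ : (ZMod (p ^ b))ˣ) : ZMod (p ^ b)) *
    (((γ.val : ℕ) : ZMod (p ^ a)) * ((p : ZMod (p ^ a)) ^ (b - a)))) with hw
  have hwx : w * x = 0 := by rw [hw]; linear_combination h1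
  have hcpw : cp p a ha.ne' w = cp p a ha.ne' α := by
    rw [hw, map_sub, map_mul, map_mul, map_mul, map_natCast, map_pow, map_natCast]
    have : ((p : ZMod p)) = 0 := by exact_mod_cast ZMod.natCast_self p
    rw [this]
    rw [zero_pow (by omega : b - a ≠ 0)]
    ring
  have hwu : IsUnit w := isUnit_of_cp_ne_zero hp ha.ne' w (by rw [hcpw]; exact hα)
  have hx0 : x = 0 := by
    have := hwu.mul_right_eq_zero.mp hwx
    exact this
  subst hx0
  rw [Prod.mk_eq_zero]
  exact ⟨rfl, by rw [hy]; simp⟩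


variable {p a b} in
lemma Mmap_ker (hp : p.Prime) (ha : 0 < a) (hab : a < b) (α β γ : ZMod (p ^ a))
    (δ : ZMod (p ^ b))
    (h : cp p a ha.ne' α = 0 ∨ cp p b (by omega : b ≠ 0) δ = 0) :
    ∃ z : ZMod (p ^ a) × ZMod (p ^ b), z ≠ 0 ∧ Mmap p a b hab.le α β γ δ z = 0 := by
  haveI : NeZero (p ^ a) := ⟨pow_ne_zero _ hp.pos.ne'⟩
  haveI : NeZero (p ^ b) := ⟨pow_ne_zero _ hp.pos.ne'⟩
  have hb : b ≠ 0 := by omega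
  have hpb1 : p ^ b = p * p ^ (b - 1) := by
    rw [← pow_succ']
    congr 1
    omega
  by_cases hδ : cp p b hb δ = 0
  · -- kernel element (0, p^(b-1))
    refine ⟨(0, ((p ^ (b - 1) : ℕ) : ZMod (p ^ b))), ?_, ?_⟩
    · intro hz
      have h2 := congrArg Prod.snd hz
      simp only at h2
      rw [show ((0 : ZMod (p ^ a) × ZMod (p ^ b)).2) = 0 from rfl] at h2
      rw [ZMod.natCast_eq_zero_iff, Nat.pow_dvd_pow_iff_le_right hp.one_lt] at h2
      omega
    · rw [Mmap_apply, Prod.mk_eq_zero]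
      constructor
      · rw [map_natCast, show ((p ^ (b - 1) : ℕ) : ZMod (p ^ a)) = 0 from by
          rw [ZMod.natCast_eq_zero_iff, Nat.pow_dvd_pow_iff_le_right hp.one_lt]; omega]
        ring
      · rw [map_zero, zero_add]
        obtain ⟨k, hk⟩ := (cp_eq_zero_iff hp.pos.ne' hb δ).mp hδ
        have hδv : δ = ((δ.val : ℕ) : ZMod (p ^ b)) := (ZMod.natCast_rightInverse δ).symm
        rw [hδv, ← Nat.cast_mul, hk, ZMod.natCast_eq_zero_iff]
        exact ⟨k, by rw [hpb1]; ring⟩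
  · -- then cp α = 0 ; kernel element (p^(a-1), -u⁻¹ * (γ.val * p^(b-1)))
    have hα : cp p a ha.ne' α = 0 := by tauto
    obtain ⟨u, hu⟩ := isUnit_of_cp_ne_zero hp hb δ hδ
    set y0 : ZMod (p ^ b) := -(((u⁻¹ : (ZMod (p ^ b))ˣ) : ZMod (p ^ b)) * ((γ.val * p ^ (b - 1) : ℕ) : ZMod (p ^ b))) with hy0
    refine ⟨(((p ^ (a - 1) : ℕ) : ZMod (p ^ a)), y0), ?_, ?_⟩
    · intro hz
      have h2 := congrArg Prod.fst hz
      simp only at h2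
      rw [show ((0 : ZMod (p ^ a) × ZMod (p ^ b)).1) = 0 from rfl] at h2
      rw [ZMod.natCast_eq_zero_iff, Nat.pow_dvd_pow_iff_le_right hp.one_lt] at h2
      omega
    · rw [Mmap_apply, Prod.mk_eq_zero]
      have hval : ((((p ^ (a - 1) : ℕ) : ZMod (p ^ a))).val) = p ^ (a - 1) := by
        rw [ZMod.val_natCast, Nat.mod_eq_of_lt]
        exact Nat.pow_lt_pow_right hp.one_lt (by omega)
      constructor
      · -- α * p^(a-1) + β * cab y0 = 0
        have hcab : (ZMod.castHom (pow_dvd_pow p hab.le) (ZMod (p ^ a))) y0 = 0 := by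
          rw [hy0, map_neg, map_mul, map_natCast]
          rw [show ((γ.val * p ^ (b - 1) : ℕ) : ZMod (p ^ a)) = 0 from by
            rw [ZMod.natCast_eq_zero_iff]
            exact Dvd.dvd.mul_left (pow_dvd_pow p (by omega)) _]
          ring
        rw [hcab, mul_zero, add_zero]
        obtain ⟨k, hk⟩ := (cp_eq_zero_iff hp.pos.ne' ha.ne' α).mp hα
        have hαv : α = ((α.val : ℕ) : ZMod (p ^ a)) := (ZMod.natCast_rightInverse α).symm
        rw [hαv, ← Nat.cast_mul, hk, ZMod.natCast_eq_zero_iff]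
        refine ⟨k, ?_⟩
        rw [show p ^ a = p * p ^ (a - 1) from by rw [← pow_succ']; congr 1; omega]
        ring
      · -- gmap γ (p^(a-1)) + δ * y0 = 0
        rw [gmap_apply p a b hp.pos.ne', hval]
        have harith : p ^ (a - 1) * (γ.val * p ^ (b - a)) = γ.val * p ^ (b - 1) := by
          rw [mul_comm (p ^ (a - 1)), mul_assoc, ← pow_add]
          congr 2
          omega
        rw [harith, hy0]
        have hmu : δ * ((u⁻¹ : (ZMod (p ^ b))ˣ) : ZMod (p ^ b)) = 1 := by
          rw [← hu]; exact u.mul_inv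
        linear_combination (-((γ.val * p ^ (b - 1) : ℕ) : ZMod (p ^ b))) * hmu

variable {p a b} in
lemma exists_Mmap (hp : p.Prime) (ha : 0 < a) (hab : a < b)
    (f : (ZMod (p ^ a) × ZMod (p ^ b)) ≃+ (ZMod (p ^ a) × ZMod (p ^ b))) :
    ∃ (α β γ : ZMod (p ^ a)) (δ : ZMod (p ^ b)),
      ∀ z, f z = Mmap p a b hab.le α β γ δ z := by
  haveI : NeZero (p ^ a) := ⟨pow_ne_zero _ hp.pos.ne'⟩
  haveI : NeZero (p ^ b) := ⟨pow_ne_zero _ hp.pos.ne'⟩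
  set A := ZMod (p ^ a)
  set B := ZMod (p ^ b)
  set e1 : A × B := ((1 : A), (0 : B)) with he1
  set e2 : A × B := ((0 : A), (1 : B)) with he2
  set α : A := (f e1).1 with hα
  set c : B := (f e1).2 with hc
  set β : A := (f e2).1 with hβ
  set δ : B := (f e2).2 with hδ
  set g : ℕ := c.val / p ^ (b - a) with hg
  refine ⟨α, β, ((g : ℕ) : A), δ, ?_⟩
  -- `p^a` kills `e1`, hence kills `c`
  have hsm : (p ^ a : ℕ) • e1 = 0 := by
    rw [he1, Prod.smul_mk, smul_zero, nsmul_eq_mul, mul_one, ZMod.natCast_self]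
    rfl
  have hca : (p ^ a : ℕ) • c = 0 := by
    rw [hc, ← Prod.smul_snd, ← map_nsmul, hsm, map_zero]
    rfl
  have hdvd : p ^ (b - a) ∣ c.val := by
    rw [nsmul_eq_mul] at hca
    rw [show c = ((c.val : ℕ) : B) from (ZMod.natCast_rightInverse c).symm, ← Nat.cast_mul,
      ZMod.natCast_eq_zero_iff] at hca
    have hca' : p ^ a * p ^ (b - a) ∣ p ^ a * c.val := by
      rw [← pow_add, Nat.add_sub_cancel' hab.le]; exact hca
    exact (Nat.mul_dvd_mul_iff_left (pow_pos hp.pos a)).mp hca'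
  have hkey : (((((g : ℕ) : A)).val * p ^ (b - a) : ℕ) : B) = c := by
    have hval : (((g : ℕ) : A)).val = g % p ^ a := ZMod.val_natCast _ g
    rw [hval]
    have h1 : (g % p ^ a) * p ^ (b - a) ≡ g * p ^ (b - a) [MOD p ^ b] := by
      have h := Nat.ModEq.mul_right' (c := p ^ (b - a)) (Nat.mod_modEq g (p ^ a))
      rwa [← pow_add, Nat.add_sub_cancel' hab.le] at h
    have h2 : g * p ^ (b - a) = c.val := Nat.div_mul_cancel hdvd
    calc ((g % p ^ a * p ^ (b - a) : ℕ) : B)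
        = ((g * p ^ (b - a) : ℕ) : B) := (ZMod.natCast_eq_natCast_iff _ _ _).mpr h1
      _ = ((c.val : ℕ) : B) := by rw [h2]
      _ = c := ZMod.natCast_rightInverse c
  intro z
  obtain ⟨x, y⟩ := z
  have hz : (x, y) = x.val • e1 + y.val • e2 := by
    rw [he1, he2, Prod.smul_mk, Prod.smul_mk, Prod.mk_add_mk]
    rw [smul_zero, smul_zero, nsmul_eq_mul, nsmul_eq_mul, mul_one, mul_one, add_zero, zero_add]
    rw [ZMod.natCast_rightInverse x, ZMod.natCast_rightInverse y]
  conv_lhs => rw [hz]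
  rw [map_add, map_nsmul, map_nsmul]
  have hf1 : f e1 = (α, c) := rfl
  have hf2 : f e2 = (β, δ) := rfl
  rw [hf1, hf2, Mmap_apply, Prod.smul_mk, Prod.smul_mk, Prod.mk_add_mk]
  have hxA : ((x.val : ℕ) : A) = x := ZMod.natCast_rightInverse x
  have hyB : ((y.val : ℕ) : B) = y := ZMod.natCast_rightInverse y
  have hyA : ((y.val : ℕ) : A) = (ZMod.castHom (pow_dvd_pow p hab.le) A) y := by
    rw [ZMod.castHom_apply, ← ZMod.natCast_val]
  refine Prod.ext ?_ ?_
  · simp only [nsmul_eq_mul]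
    rw [hxA, hyA]
    ring
  · simp only [nsmul_eq_mul]
    rw [gmap_apply p a b hp.pos.ne']
    rw [show ((((((g : ℕ) : A)).val * p ^ (b - a) : ℕ)) : ℕ) = (((g : ℕ) : A)).val * p ^ (b - a) from rfl] at hkey
    have : ((x.val * ((((g : ℕ) : A)).val * p ^ (b - a)) : ℕ) : B)
        = ((x.val : ℕ) : B) * c := by
      rw [← hkey]
      push_cast
      ring
    rw [this, hyB]
    ring

lemma Mmap_sub (hab : a ≤ b) (α β γ : ZMod (p ^ a)) (δ : ZMod (p ^ b))
    (z : ZMod (p ^ a) × ZMod (p ^ b)) :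
    Mmap p a b hab α β γ δ z - z = Mmap p a b hab (α - 1) β γ (δ - 1) z := by
  obtain ⟨x, y⟩ := z
  rw [Mmap_apply, Mmap_apply, Prod.mk_sub_mk]
  exact Prod.ext (by ring) (by ring)

variable {p} in
lemma card_cond (hp : p.Prime) (n : ℕ) (hn : n ≠ 0) :
    Nat.card {x : ZMod (p ^ n) // cp p n hn x ≠ 0 ∧ cp p n hn x ≠ 1} =
      p ^ (n - 1) * (p - 2) := by
  haveI : NeZero (p ^ n) := ⟨pow_ne_zero _ hp.pos.ne'⟩
  haveI : Fact p.Prime := ⟨hp⟩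
  set N := p ^ (n - 1) with hN
  let e : ZMod (p ^ n) ≃ ZMod p × Fin N :=
    { toFun := fun x => (((x.val : ℕ) : ZMod p), ⟨x.val / p, by
        rw [Nat.div_lt_iff_lt_mul hp.pos]
        calc x.val < p ^ n := ZMod.val_lt x
          _ = N * p := by rw [hN, ← pow_succ]; congr 1; omega⟩)
      invFun := fun t => ((t.1.val + p * t.2.val : ℕ) : ZMod (p ^ n))
      left_inv := fun x => by
        simp only
        rw [ZMod.val_natCast, Nat.mod_add_div, ZMod.natCast_rightInverse x]
      right_inv := fun t => by
        obtain ⟨t, u⟩ := t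
        have htv : t.val < p := ZMod.val_lt t
        have hm : t.val + p * u.val < p ^ n := by
          have h2 : u.val + 1 ≤ N := u.isLt
          calc t.val + p * u.val < p * u.val + p := by omega
            _ = p * (u.val + 1) := by ring
            _ ≤ p * N := Nat.mul_le_mul_left _ h2
            _ = p ^ n := by rw [hN, ← pow_succ']; congr 1; omega
        have hval : (((t.val + p * u.val : ℕ) : ZMod (p ^ n))).val = t.val + p * u.val := by
          rw [ZMod.val_natCast, Nat.mod_eq_of_lt hm]
        refine Prod.ext ?_ ?_
        · simp only [hval]
          push_cast
          rw [ZMod.natCast_self]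
          rw [ZMod.natCast_rightInverse t]
          ring
        · apply Fin.ext
          simp only [hval]
          rw [mul_comm p u.val, Nat.add_mul_div_right _ _ hp.pos, Nat.div_eq_of_lt htv]
          simp }
  have hcard1 : Nat.card {x : ZMod (p ^ n) // cp p n hn x ≠ 0 ∧ cp p n hn x ≠ 1} =
      Nat.card {y : ZMod p × Fin N // y.1 ≠ 0 ∧ y.1 ≠ 1} := by
    apply Nat.card_congr
    refine e.subtypeEquiv fun x => ?_
    rw [cp_apply hp.pos.ne' hn]
    exact Iff.rfl
  have e2 : {y : ZMod p × Fin N // y.1 ≠ 0 ∧ y.1 ≠ 1} ≃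
      {t : ZMod p // t ≠ 0 ∧ t ≠ 1} × Fin N :=
    { toFun := fun z => (⟨z.1.1, z.2⟩, z.1.2)
      invFun := fun w => ⟨(w.1.1, w.2), w.1.2⟩
      left_inv := fun z => rfl
      right_inv := fun w => rfl }
  have hcard2 : Nat.card {t : ZMod p // t ≠ 0 ∧ t ≠ 1} = p - 2 := by
    rw [Nat.card_eq_fintype_card, Fintype.card_subtype]
    have hset : (Finset.filter (fun t : ZMod p => t ≠ 0 ∧ t ≠ 1) Finset.univ) =
        ({0, 1} : Finset (ZMod p))ᶜ := by
      ext t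
      simp only [Finset.mem_filter, Finset.mem_univ, true_and, Finset.mem_compl,
        Finset.mem_insert, Finset.mem_singleton]
      tauto
    rw [hset, Finset.card_compl, ZMod.card]
    congr 1
    rw [Finset.card_insert_of_notMem (by simp), Finset.card_singleton]
  rw [hcard1, Nat.card_congr e2, Nat.card_prod, hcard2, Nat.card_eq_fintype_card,
    Fintype.card_fin]
  ring

end FpfAux

open FpfAux in
/-- For a prime `p` and positive integers `a < b`, the number of fixed-point-free
automorphisms of `ℤ/p^a ⊕ ℤ/p^b` is `p^(3a+b-2)(p-2)²`. -/
theorem card_fpf_automorphisms_zmod_pa_zmod_pb (p : ℕ) (hp : p.Prime)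
    (a b : ℕ) (ha : 0 < a) (hab : a < b) :
    Nat.card {f : AddAut (ZMod (p ^ a) × ZMod (p ^ b)) //
      ∀ g : ZMod (p ^ a) × ZMod (p ^ b), f g = g → g = 0} =
    p ^ (3 * a + b - 2) * (p - 2) ^ 2 := by
  haveI : NeZero (p ^ a) := ⟨pow_ne_zero _ hp.pos.ne'⟩
  haveI : NeZero (p ^ b) := ⟨pow_ne_zero _ hp.pos.ne'⟩
  have hb : b ≠ 0 := by omega
  have hbij : ∀ (α β γ : ZMod (p ^ a)) (δ : ZMod (p ^ b)),
      cp p a ha.ne' α ≠ 0 → cp p b hb δ ≠ 0 →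
      Function.Bijective (Mmap p a b hab.le α β γ δ) := fun α β γ δ h1 h2 =>
    Finite.injective_iff_bijective.mp (Mmap_inj hp ha hab h1 h2)
  have hfpf : ∀ (α β γ : ZMod (p ^ a)) (δ : ZMod (p ^ b)),
      cp p a ha.ne' α ≠ 1 → cp p b hb δ ≠ 1 →
      ∀ g, Mmap p a b hab.le α β γ δ g = g → g = 0 := by
    intro α β γ δ h1 h2 g hg
    have h0 : Mmap p a b hab.le (α - 1) β γ (δ - 1) g = 0 := by
      rw [← Mmap_sub, hg, sub_self]
    have hinj : Function.Injective (Mmap p a b hab.le (α - 1) β γ (δ - 1)) := by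
      refine Mmap_inj hp ha hab ?_ ?_
      · rw [map_sub, map_one]; exact sub_ne_zero.mpr h1
      · rw [map_sub, map_one]; exact sub_ne_zero.mpr h2
    exact (injective_iff_map_eq_zero _).mp hinj g h0
  let T := {α : ZMod (p ^ a) // cp p a ha.ne' α ≠ 0 ∧ cp p a ha.ne' α ≠ 1} ×
    {δ : ZMod (p ^ b) // cp p b hb δ ≠ 0 ∧ cp p b hb δ ≠ 1} ×
    ZMod (p ^ a) × ZMod (p ^ a)
  let Φ : T → {f : AddAut (ZMod (p ^ a) × ZMod (p ^ b)) //
      ∀ g : ZMod (p ^ a) × ZMod (p ^ b), f g = g → g = 0} := fun t =>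
    ⟨AddEquiv.ofBijective (Mmap p a b hab.le t.1.1 t.2.2.1 t.2.2.2 t.2.1.1)
        (hbij t.1.1 t.2.2.1 t.2.2.2 t.2.1.1 t.1.2.1 t.2.1.2.1),
      fun g hg => hfpf t.1.1 t.2.2.1 t.2.2.2 t.2.1.1 t.1.2.2 t.2.1.2.2 g hg⟩
  have hΦ : Function.Bijective Φ := by
    constructor
    · rintro ⟨⟨α, hα⟩, ⟨δ, hδ⟩, β, γ⟩ ⟨⟨α', hα'⟩, ⟨δ', hδ'⟩, β', γ'⟩ h
      have h1 := Subtype.ext_iff.mp h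
      have hfun : ∀ z, Mmap p a b hab.le α β γ δ z = Mmap p a b hab.le α' β' γ' δ' z :=
        fun z => congrArg (fun (e : AddAut (ZMod (p ^ a) × ZMod (p ^ b))) => e z) h1
      have h10 := hfun (1, 0)
      have h01 := hfun (0, 1)
      rw [Mmap_apply, Mmap_apply, Prod.mk.injEq] at h10 h01
      simp only [mul_one, mul_zero, map_zero, map_one, add_zero, zero_add, map_zero,
        mul_zero] at h10 h01
      obtain ⟨hαα, hγγ⟩ := h10
      obtain ⟨hββ, hδδ⟩ := h01
      have hγ2 : γ = γ' := gmap_inj hp ha hab.le hγγ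
      subst hαα hδδ hββ hγ2
      rfl
    · rintro ⟨f, hf⟩
      obtain ⟨α, β, γ, δ, hfM⟩ := exists_Mmap hp ha hab f
      have hα0 : cp p a ha.ne' α ≠ 0 := by
        intro h0
        obtain ⟨z, hz, hz0⟩ := Mmap_ker hp ha hab α β γ δ (Or.inl h0)
        refine hz (EquivLike.injective f ?_)
        rw [hfM z, hz0, map_zero]
      have hδ0 : cp p b hb δ ≠ 0 := by
        intro h0
        obtain ⟨z, hz, hz0⟩ := Mmap_ker hp ha hab α β γ δ (Or.inr h0)
        refine hz (EquivLike.injective f ?_)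
        rw [hfM z, hz0, map_zero]
      have hα1 : cp p a ha.ne' α ≠ 1 := by
        intro h1
        obtain ⟨z, hz, hz0⟩ := Mmap_ker hp ha hab (α - 1) β γ (δ - 1)
          (Or.inl (by rw [map_sub, map_one, h1, sub_self]))
        refine hz (hf z ?_)
        rw [hfM z]
        have hs := Mmap_sub p a b hab.le α β γ δ z
        rw [hz0] at hs
        exact sub_eq_zero.mp hs
      have hδ1 : cp p b hb δ ≠ 1 := by
        intro h1
        obtain ⟨z, hz, hz0⟩ := Mmap_ker hp ha hab (α - 1) β γ (δ - 1)
          (Or.inr (by rw [map_sub, map_one, h1, sub_self]))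
        refine hz (hf z ?_)
        rw [hfM z]
        have hs := Mmap_sub p a b hab.le α β γ δ z
        rw [hz0] at hs
        exact sub_eq_zero.mp hs
      refine ⟨(⟨α, hα0, hα1⟩, ⟨δ, hδ0, hδ1⟩, β, γ), ?_⟩
      apply Subtype.ext
      exact AddEquiv.ext fun z => (hfM z).symm
  rw [← Nat.card_eq_of_bijective Φ hΦ]
  rw [Nat.card_prod, Nat.card_prod, Nat.card_prod, card_cond hp a ha.ne', card_cond hp b hb,
    Nat.card_zmod]
  have hpow : p ^ (a - 1) * (p ^ (b - 1) * (p ^ a * p ^ a)) = p ^ (3 * a + b - 2) := by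
    rw [← pow_add, ← pow_add, ← pow_add]
    congr 1
    omega
  calc p ^ (a - 1) * (p - 2) * (p ^ (b - 1) * (p - 2) * (p ^ a * p ^ a))
      = p ^ (a - 1) * (p ^ (b - 1) * (p ^ a * p ^ a)) * (p - 2) ^ 2 := by ring
    _ = p ^ (3 * a + b - 2) * (p - 2) ^ 2 := by rw [hpow]
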